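/- Let U^t satisfy the udKdV update rule and define V^t = max_i (U^t_i + U^t_{i+1}). Then V^t ≤ 1 if and only if U^{t+1}_i = U^t_{i−1} for all i; moreover if V^t ≤ 1 then V^{t+1} = V^t. -/

import Mathlib

open Function Set

private lemma key_lemma (U : ℤ → ℤ → ℝ)
    (hfin : ∀ t, (Function.support (U t)).Finite) (t : ℤ)
    (h : ∀ n : ℤ, (∑ᶠ j ∈ Set.Iio n, (U t j - U (t + 1) j)) = U t (n - 1) →
      U (t + 1) n = ∑ᶠ j ∈ Set.Iio n, (U t j - U (t + 1) j)) :
    ∀ i : ℤ, (∑ᶠ j ∈ Set.Iio i, (U t j - U (t + 1) j)) = U t (i - 1) := by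
  set D : ℤ → ℝ := fun j => U t j - U (t + 1) j with hDdef
  have hDsupp : (Function.support D).Finite := by
    apply Set.Finite.subset ((hfin t).union (hfin (t + 1)))
    intro x hx
    by_contra hc
    simp only [Set.mem_union, Function.mem_support, not_or, not_not] at hc
    exact hx (by simp [hDdef, hc.1, hc.2])
  obtain ⟨N, hN⟩ : ∃ N : ℤ, ∀ j : ℤ, j < N → D j = 0 ∧ U t j = 0 := by
    obtain ⟨b, hb⟩ := (hDsupp.union (hfin t)).bddBelow
    refine ⟨b, fun j hj => ⟨?_, ?_⟩⟩
    · by_contra hc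
      exact absurd (hb (Set.mem_union_left _ hc)) (not_le.2 hj)
    · by_contra hc
      exact absurd (hb (Set.mem_union_right _ hc)) (not_le.2 hj)
  have hzero : ∀ i : ℤ, i ≤ N → (∑ᶠ j ∈ Set.Iio i, D j) = 0 := by
    intro i hi
    apply finsum_mem_of_eqOn_zero
    intro j hj
    exact (hN j (lt_of_lt_of_le hj hi)).1
  have hsucc : ∀ i : ℤ, (∑ᶠ j ∈ Set.Iio (i + 1), D j) = (∑ᶠ j ∈ Set.Iio i, D j) + D i := by
    intro i
    have hins : Set.Iio (i + 1) = insert i (Set.Iio i) := by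
      ext j; simp only [Set.mem_Iio, Set.mem_insert_iff]; omega
    rw [hins, finsum_mem_insert' D (by simp) (hDsupp.inter_of_right _)]
    ring
  intro i
  rcases le_or_gt N i with hi | hi
  · refine Int.le_induction (motive := fun k _ => (∑ᶠ j ∈ Set.Iio k, D j) = U t (k - 1)) ?_ ?_ i hi
    · show (∑ᶠ j ∈ Set.Iio N, D j) = U t (N - 1)
      rw [hzero N le_rfl, (hN (N - 1) (by omega)).2]
    · intro n hn ih
      have ih' : (∑ᶠ j ∈ Set.Iio n, D j) = U t (n - 1) := ih
      show (∑ᶠ j ∈ Set.Iio (n + 1), D j) = U t (n + 1 - 1)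
      have hUn := h n ih'
      rw [hsucc n]
      simp only [hDdef] at *
      rw [← hUn]
      have : n + 1 - 1 = n := by omega
      rw [this]; ring
  · rw [hzero i (le_of_lt hi), (hN (i - 1) (by omega)).2]

/-- Let `U^t` satisfy the udKdV update rule and define
`V^t = max_i (U^t_i + U^t_{i+1})`. Then `V^t ≤ 1` if and only if
`U^{t+1}_i = U^t_{i−1}` for all `i`; moreover if `V^t ≤ 1` then `V^{t+1} = V^t`. -/
theorem stmt_5 (U : ℤ → ℤ → ℝ)
    (hfin : ∀ t, (Function.support (U t)).Finite)
    (hup : ∀ t i, U (t + 1) i =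
      min (1 - U t i) (∑ᶠ j ∈ Set.Iio i, (U t j - U (t + 1) j)))
    (V : ℤ → ℝ) (hV : ∀ t, V t = ⨆ i : ℤ, (U t i + U t (i + 1)))
    (t : ℤ) :
    (V t ≤ 1 ↔ ∀ i : ℤ, U (t + 1) i = U t (i - 1)) ∧
    (V t ≤ 1 → V (t + 1) = V t) := by
  -- boundedness of the range
  have hbdd : ∀ s : ℤ, BddAbove (Set.range fun i : ℤ => U s i + U s (i + 1)) := by
    intro s
    apply Set.Finite.bddAbove
    have hfin2 : ((Function.support (U s)) ∪ (fun i : ℤ => i + 1) ⁻¹' (Function.support (U s))).Finite :=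
      (hfin s).union ((hfin s).preimage (fun a _ b _ h => by omega))
    apply Set.Finite.subset (Set.Finite.insert 0 (hfin2.image (fun i => U s i + U s (i + 1))))
    rintro x ⟨i, rfl⟩
    by_cases hi : i ∈ (Function.support (U s)) ∪ (fun i : ℤ => i + 1) ⁻¹' (Function.support (U s))
    · exact Set.mem_insert_of_mem _ ⟨i, hi, rfl⟩
    · simp only [Set.mem_union, Set.mem_preimage, Function.mem_support, not_or, not_not] at hi
      simp [hi.1, hi.2]
  -- direction: pointwise bound implies shift
  have main : (∀ i : ℤ, U t i + U t (i + 1) ≤ 1) → ∀ i : ℤ, U (t + 1) i = U t (i - 1) := by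
    intro hb
    have hble : ∀ n : ℤ, U t (n - 1) ≤ 1 - U t n := by
      intro n
      have := hb (n - 1)
      have hn : n - 1 + 1 = n := by omega
      rw [hn] at this; linarith
    have hS := key_lemma U hfin t (fun n hn => by
      rw [hup t n, hn]
      exact min_eq_right (hble n))
    intro i
    rw [hup t i, hS i]
    exact min_eq_right (hble i)
  -- direction: shift implies pointwise bound
  have conv : (∀ i : ℤ, U (t + 1) i = U t (i - 1)) → ∀ i : ℤ, U t i + U t (i + 1) ≤ 1 := by
    intro h i
    have hS := key_lemma U hfin t (fun n hn => by rw [h n]; exact hn.symm)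
    have h1 := hup t (i + 1)
    rw [h (i + 1), hS (i + 1)] at h1
    have hi1 : i + 1 - 1 = i := by omega
    rw [hi1] at h1
    have : U t i ≤ 1 - U t (i + 1) := h1 ▸ min_le_left _ _
    linarith
  have hiff : V t ≤ 1 ↔ ∀ i : ℤ, U (t + 1) i = U t (i - 1) := by
    constructor
    · intro hv
      apply main
      intro i
      calc U t i + U t (i + 1) ≤ ⨆ i : ℤ, (U t i + U t (i + 1)) := le_ciSup (hbdd t) i
        _ ≤ 1 := by rw [← hV t]; exact hv
    · intro h
      rw [hV t]
      exact ciSup_le (conv h)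
  refine ⟨hiff, fun hv => ?_⟩
  have hsh := hiff.1 hv
  have heq : ∀ i : ℤ, U (t + 1) i + U (t + 1) (i + 1) =
      (fun k : ℤ => U t k + U t (k + 1)) (i - 1) := by
    intro i
    rw [hsh i, hsh (i + 1)]
    show U t (i - 1) + U t (i + 1 - 1) = U t (i - 1) + U t (i - 1 + 1)
    have h1 : i + 1 - 1 = i := by omega
    have h2 : i - 1 + 1 = i := by omega
    rw [h1, h2]
  rw [hV (t + 1), hV t]
  calc (⨆ i : ℤ, (U (t + 1) i + U (t + 1) (i + 1)))
      = ⨆ i : ℤ, (fun k : ℤ => U t k + U t (k + 1)) (i - 1) := by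
        exact iSup_congr heq
    _ = ⨆ k : ℤ, (U t k + U t (k + 1)) := by
        exact Function.Surjective.iSup_comp (f := fun i : ℤ => i - 1) (g := fun k : ℤ => U t k + U t (k + 1)) (fun y => ⟨y + 1, by simp⟩)
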